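/- Let 0 < p ≤ 1. Then there exists a constant C > 0, independent of n, such that for every n ∈ ℕ the n-th approximation number of the identity map from ℓ_p^{2n} to ℓ_∞^{2n} satisfies a_n(id : ℓ_p^{2n} → ℓ_∞^{2n}) ≥ C · n^{-1/2}. -/

import Mathlib

open scoped ENNReal BigOperators

/-- The ℓ_p quasi-norm on ℝ^N, for `p : ℝ≥0∞` (with `p = ∞` giving the sup-norm). -/
noncomputable def pNorm (p : ℝ≥0∞) {N : ℕ} (x : Fin N → ℝ) : ℝ :=
  if p = ∞ then ⨆ i, |x i| else (∑ i, |x i| ^ p.toReal) ^ (1 / p.toReal)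

/-- The n-th Kolmogorov number of the identity map `id : ℓ_p^N → ℓ_q^N`. -/
noncomputable def kolmogorovNumber (p q : ℝ≥0∞) (N n : ℕ) : ℝ :=
  sInf { r : ℝ | ∃ V : Submodule ℝ (Fin N → ℝ), Module.finrank ℝ (↥V) < n ∧
    r = sSup { s : ℝ | ∃ x : Fin N → ℝ, pNorm p x ≤ 1 ∧
      s = sInf { t : ℝ | ∃ v ∈ V, t = pNorm q (x - v) } } }

/-- The n-th Gelfand number of the identity map `id : ℓ_p^N → ℓ_q^N`. -/
noncomputable def gelfandNumber (p q : ℝ≥0∞) (N n : ℕ) : ℝ :=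
  sInf { r : ℝ | ∃ M : Submodule ℝ (Fin N → ℝ), N - Module.finrank ℝ (↥M) < n ∧
    r = sSup { s : ℝ | ∃ x ∈ M, pNorm p x ≤ 1 ∧ s = pNorm q x } }

/-- The n-th approximation number of the identity map `id : ℓ_p^N → ℓ_q^N`. -/
noncomputable def approxNumber (p q : ℝ≥0∞) (N n : ℕ) : ℝ :=
  sInf { r : ℝ | ∃ L : (Fin N → ℝ) →ₗ[ℝ] (Fin N → ℝ),
    Module.finrank ℝ (↥(LinearMap.range L)) < n ∧
    r = sSup { s : ℝ | ∃ x : Fin N → ℝ, pNorm p x ≤ 1 ∧ s = pNorm q (x - L x) } }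


open Module Finset

lemma euclid_sum_apply {N r : ℕ} (a : Fin r → ℝ) (g : Fin r → EuclideanSpace ℝ (Fin N)) (i : Fin N) :
    (∑ x, a x • g x) i = ∑ x, a x * g x i := by
  induction (Finset.univ : Finset (Fin r)) using Finset.cons_induction with
  | empty => rfl
  | cons x s hx ih => rw [Finset.sum_cons, Finset.sum_cons, ← ih]; rfl

lemma trace_sq_le_rank_mul_frob {N : ℕ}
    (L : EuclideanSpace ℝ (Fin N) →ₗ[ℝ] EuclideanSpace ℝ (Fin N)) :
    (∑ i, L (EuclideanSpace.single i 1) i) ^ 2 ≤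
      (finrank ℝ (LinearMap.range L) : ℝ) *
        ∑ j, ∑ i, (L (EuclideanSpace.single j 1) i) ^ 2 := by
  classical
  set V := LinearMap.range L with hV
  set r := finrank ℝ V with hr
  let u : OrthonormalBasis (Fin r) ℝ V := stdOrthonormalBasis ℝ V
  let w : Fin r → EuclideanSpace ℝ (Fin N) := fun k => (u k : EuclideanSpace ℝ (Fin N))
  let v : Fin N → V := fun j => ⟨L (EuclideanSpace.single j 1), LinearMap.mem_range_self _ _⟩
  let c : Fin r → Fin N → ℝ := fun k j => u.repr (v j) k
  have hrepr : ∀ j i, L (EuclideanSpace.single j 1) i = ∑ k, c k j * w k i := by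
    intro j i
    have h := u.sum_repr (v j)
    have h2 : ((∑ k, u.repr (v j) k • u k : V) : EuclideanSpace ℝ (Fin N)) = L (EuclideanSpace.single j 1) := by
      rw [h]
    rw [← h2]
    push_cast
    rw [euclid_sum_apply]
  have hpars : ∀ j, ∑ k, (c k j) ^ 2 = ∑ i, (L (EuclideanSpace.single j 1) i) ^ 2 := by
    intro j
    have h1 : ‖u.repr (v j)‖ ^ 2 = ‖v j‖ ^ 2 := by rw [u.repr.norm_map]
    have h2 : ‖u.repr (v j)‖ ^ 2 = ∑ k, (c k j) ^ 2 := by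
      rw [EuclideanSpace.norm_eq, Real.sq_sqrt (by positivity)]
      simp [c]
    have h3 : ‖v j‖ ^ 2 = ∑ i, (L (EuclideanSpace.single j 1) i) ^ 2 := by
      rw [show ‖v j‖ = ‖L (EuclideanSpace.single j 1)‖ from rfl]
      rw [EuclideanSpace.norm_eq, Real.sq_sqrt (by positivity)]
      simp [Real.norm_eq_abs, sq_abs]
    rw [← h2, h1, h3]
  have hwnorm : ∀ k, ∑ i, (w k i) ^ 2 = 1 := by
    intro k
    have h1 : ‖w k‖ = 1 := by
      have := u.orthonormal.1 k
      exact this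
    rw [EuclideanSpace.norm_eq, Real.sqrt_eq_one] at h1
    simpa [Real.norm_eq_abs, sq_abs] using h1
  have htr : ∑ i, L (EuclideanSpace.single i 1) i
      = ∑ x : Fin r × Fin N, c x.1 x.2 * w x.1 x.2 := by
    rw [← Finset.univ_product_univ, Finset.sum_product]
    simp only [hrepr]
    rw [Finset.sum_comm]
  rw [htr]
  calc (∑ x : Fin r × Fin N, c x.1 x.2 * w x.1 x.2) ^ 2
      ≤ (∑ x : Fin r × Fin N, (c x.1 x.2) ^ 2) * (∑ x : Fin r × Fin N, (w x.1 x.2) ^ 2) :=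
        Finset.sum_mul_sq_le_sq_mul_sq _ _ _
    _ = (∑ j, ∑ i, (L (EuclideanSpace.single j 1) i) ^ 2) * (r : ℝ) := by
        have hA : ∑ x : Fin r × Fin N, (c x.1 x.2) ^ 2
            = ∑ j, ∑ i, (L (EuclideanSpace.single j 1) i) ^ 2 := by
          rw [← Finset.univ_product_univ, Finset.sum_product, Finset.sum_comm]
          exact Finset.sum_congr rfl fun j _ => hpars j
        have hB : ∑ x : Fin r × Fin N, (w x.1 x.2) ^ 2 = (r : ℝ) := by
          rw [← Finset.univ_product_univ, Finset.sum_product]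
          simp [hwnorm]
        rw [hA, hB]
    _ = (r : ℝ) * ∑ j, ∑ i, (L (EuclideanSpace.single j 1) i) ^ 2 := mul_comm _ _

lemma bridge {N : ℕ} (L : (Fin N → ℝ) →ₗ[ℝ] (Fin N → ℝ)) :
    ∃ L' : EuclideanSpace ℝ (Fin N) →ₗ[ℝ] EuclideanSpace ℝ (Fin N),
      (∀ j i, L' (EuclideanSpace.single j 1) i = L (Pi.single j 1) i) ∧
      finrank ℝ (LinearMap.range L') = finrank ℝ (LinearMap.range L) := by
  let e : EuclideanSpace ℝ (Fin N) ≃ₗ[ℝ] (Fin N → ℝ) := WithLp.linearEquiv 2 ℝ _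
  refine ⟨e.symm.toLinearMap ∘ₗ L ∘ₗ e.toLinearMap, fun j i => rfl, ?_⟩
  have h : LinearMap.range (e.symm.toLinearMap ∘ₗ L ∘ₗ e.toLinearMap)
      = Submodule.map e.symm.toLinearMap (LinearMap.range L) := by
    rw [LinearMap.range_comp, LinearMap.range_comp, LinearEquiv.range, Submodule.map_top]
  rw [h]
  exact LinearEquiv.finrank_map_eq _ _

lemma numeric_contra (ν ε : ℝ) (hν1 : 1 ≤ ν) (hε0 : 0 ≤ ε) (hεle : ε ≤ 1/10)
    (hε2 : ν * ε^2 = 1/100)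
    (hchain : (2*ν*(1-ε))^2 ≤ ν * (2*ν*(1+ε)^2 + (2*ν)^2*ε^2)) : False := by
  have hc : ν^2 * (ν * ε^2) = ν^2 * (1/100) := by rw [hε2]
  have h1 : ν^2 * ε ≤ ν^2 * (1/10) := mul_le_mul_of_nonneg_left hεle (sq_nonneg ν)
  have h2 : (0:ℝ) ≤ (ν*ε)^2 := sq_nonneg _
  have h3 : (1:ℝ) ≤ ν^2 := by nlinarith
  nlinarith [hchain, hc, h1, h2, h3]

lemma exists_big_entry {n : ℕ} (hn : 0 < n)
    (L : (Fin (2*n) → ℝ) →ₗ[ℝ] (Fin (2*n) → ℝ))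
    (hrank : finrank ℝ (LinearMap.range L) < n) :
    ∃ j i, (1/10 : ℝ) * (n:ℝ) ^ (-(1/2):ℝ) ≤ |(Pi.single j 1 : Fin (2*n) → ℝ) i - L (Pi.single j 1) i| := by
  by_contra hcon
  push_neg at hcon
  set ν : ℝ := (n : ℝ) with hν
  have hν1 : (1:ℝ) ≤ ν := by rw [hν]; exact_mod_cast hn
  have hν0 : (0:ℝ) < ν := by linarith
  set ε : ℝ := (1/10 : ℝ) * ν ^ (-(1/2):ℝ) with hε
  have hε0 : 0 ≤ ε := by positivity
  have hεle : ε ≤ 1/10 := by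
    have : ν ^ (-(1/2):ℝ) ≤ 1 :=
      Real.rpow_le_one_of_one_le_of_nonpos hν1 (by norm_num)
    calc ε ≤ (1/10) * 1 := by rw [hε]; nlinarith
    _ = 1/10 := by ring
  have hε2 : ν * ε ^ 2 = 1/100 := by
    have h1 : (ν ^ (-(1/2):ℝ)) ^ (2:ℕ) = ν⁻¹ := by
      rw [← Real.rpow_natCast (ν ^ (-(1/2):ℝ)) 2, ← Real.rpow_mul hν0.le]
      norm_num
      exact Real.rpow_neg_one ν
    have : ε ^ 2 = (1/100) * ν⁻¹ := by rw [hε, mul_pow, h1]; ring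
    rw [this]; field_simp
  obtain ⟨L', hL', hrk⟩ := bridge L
  set B : Fin (2*n) → Fin (2*n) → ℝ := fun j i => L (Pi.single j 1) i with hB
  have hentry : ∀ j i, |(if i = j then (1:ℝ) else 0) - B j i| ≤ ε := by
    intro j i
    have := (hcon j i).le
    rwa [Pi.single_apply] at this
  have hdiag : ∀ i, 1 - ε ≤ B i i := by
    intro i
    have h := hentry i i
    rw [if_pos rfl] at h
    have h2 := abs_le.1 h
    linarith [h2.2]
  have hT : (2*n : ℝ) * (1 - ε) ≤ ∑ i, B i i := by
    calc (2*n : ℝ) * (1 - ε) = ∑ _i : Fin (2*n), (1 - ε) := by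
          rw [Finset.sum_const, card_univ, Fintype.card_fin]; push_cast; ring
      _ ≤ ∑ i, B i i := Finset.sum_le_sum fun i _ => hdiag i
  have hF : ∑ j, ∑ i, (B j i)^2 ≤ (2*n:ℝ) * (1+ε)^2 + (2*n:ℝ)^2 * ε^2 := by
    have hper : ∀ j i, (B j i)^2 ≤ ε^2 + (if i = j then (1+ε)^2 else 0) := by
      intro j i
      by_cases hij : i = j
      · have := hentry j i
        rw [if_pos hij] at this
        have h2 := abs_le.1 this
        rw [if_pos hij]
        nlinarith [h2.1, h2.2, sq_nonneg ε]
      · have := hentry j i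
        rw [if_neg hij] at this
        rw [if_neg hij]
        have h2 := abs_le.1 this
        nlinarith [h2.1, h2.2]
    calc ∑ j, ∑ i, (B j i)^2
        ≤ ∑ j : Fin (2*n), ∑ i : Fin (2*n), (ε^2 + (if i = j then (1+ε)^2 else 0)) :=
          Finset.sum_le_sum fun j _ => Finset.sum_le_sum fun i _ => hper j i
      _ = (2*n:ℝ)^2 * ε^2 + (2*n:ℝ) * (1+ε)^2 := by
          simp [Finset.sum_add_distrib, Finset.sum_ite_eq, card_univ]
          push_cast; ring
      _ = (2*n:ℝ) * (1+ε)^2 + (2*n:ℝ)^2 * ε^2 := by ring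
  have hkey := trace_sq_le_rank_mul_frob L'
  have htr_eq : ∑ i, L' (EuclideanSpace.single i 1) i = ∑ i, B i i :=
    Finset.sum_congr rfl fun i _ => hL' i i
  have hfr_eq : ∑ j, ∑ i, (L' (EuclideanSpace.single j 1) i)^2 = ∑ j, ∑ i, (B j i)^2 :=
    Finset.sum_congr rfl fun j _ => Finset.sum_congr rfl fun i _ => by rw [hL']
  rw [htr_eq, hfr_eq, hrk] at hkey
  have hrn : (finrank ℝ (LinearMap.range L) : ℝ) ≤ ν := by
    rw [hν]; exact_mod_cast hrank.le
  have hFnn : (0:ℝ) ≤ ∑ j, ∑ i, (B j i)^2 := by positivity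
  have hT0 : (0:ℝ) ≤ (2*n:ℝ) * (1 - ε) := by
    have h2n : (0:ℝ) ≤ (2*n:ℝ) := by positivity
    nlinarith
  have hT2 : ((2*n:ℝ) * (1 - ε))^2 ≤ (∑ i, B i i)^2 := pow_le_pow_left₀ hT0 hT 2
  have hchain : ((2*n:ℝ) * (1 - ε))^2 ≤ ν * ((2*n:ℝ) * (1+ε)^2 + (2*n:ℝ)^2 * ε^2) := by
    calc ((2*n:ℝ) * (1 - ε))^2 ≤ (∑ i, B i i)^2 := hT2
      _ ≤ (finrank ℝ (LinearMap.range L) : ℝ) * ∑ j, ∑ i, (B j i)^2 := hkey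
      _ ≤ ν * ∑ j, ∑ i, (B j i)^2 := mul_le_mul_of_nonneg_right hrn hFnn
      _ ≤ ν * ((2*n:ℝ) * (1+ε)^2 + (2*n:ℝ)^2 * ε^2) := mul_le_mul_of_nonneg_left hF hν0.le
  have hchain2 : (2*ν*(1-ε))^2 ≤ ν * (2*ν*(1+ε)^2 + (2*ν)^2*ε^2) := hchain
  exact numeric_contra ν ε hν1 hε0 hεle hε2 hchain2

section main
variable {p : ℝ} (h1 : 0 < p) (h2 : p ≤ 1)

lemma pNorm_ofReal {N : ℕ} (h1 : 0 < p) (x : Fin N → ℝ) :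
    pNorm (ENNReal.ofReal p) x = (∑ i, |x i| ^ p) ^ (1/p) := by
  rw [pNorm, if_neg ENNReal.ofReal_ne_top, ENNReal.toReal_ofReal h1.le]

lemma pNorm_top {N : ℕ} (x : Fin N → ℝ) : pNorm ∞ x = ⨆ i, |x i| := if_pos rfl

lemma pNorm_single {N : ℕ} (h1 : 0 < p) (j : Fin N) :
    pNorm (ENNReal.ofReal p) (Pi.single j (1:ℝ)) = 1 := by
  rw [pNorm_ofReal h1]
  have hs : ∑ i, |(Pi.single j (1:ℝ) : Fin N → ℝ) i| ^ p = 1 := by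
    have : ∀ i, |(Pi.single j (1:ℝ) : Fin N → ℝ) i| ^ p = if i = j then 1 else 0 := by
      intro i
      rw [Pi.single_apply]
      by_cases hij : i = j
      · simp [hij]
      · simp [hij, Real.zero_rpow h1.ne']
    rw [Finset.sum_congr rfl fun i _ => this i]
    simp
  rw [hs, Real.one_rpow]

lemma coord_le_one {N : ℕ} (h1 : 0 < p) {x : Fin N → ℝ}
    (hx : pNorm (ENNReal.ofReal p) x ≤ 1) : ∀ i, |x i| ≤ 1 := by
  intro i
  rw [pNorm_ofReal h1] at hx
  by_contra hgt
  push_neg at hgt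
  have hxi : (1:ℝ) < |x i| ^ p :=
    (Real.one_lt_rpow_iff_of_pos (lt_trans one_pos hgt)).2 (Or.inl ⟨hgt, h1⟩)
  have hsum : (1:ℝ) < ∑ i', |x i'| ^ p :=
    lt_of_lt_of_le hxi (Finset.single_le_sum
      (fun i' _ => Real.rpow_nonneg (abs_nonneg _) p) (Finset.mem_univ i))
  have : (1:ℝ) < (∑ i', |x i'| ^ p) ^ (1/p) :=
    (Real.one_lt_rpow_iff_of_pos (lt_trans one_pos hsum)).2
      (Or.inl ⟨hsum, by positivity⟩)
  linarith

end main


/-- For `0 < p ≤ 1` there is `C > 0` with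
`a_n(id : ℓ_p^{2n} → ℓ_∞^{2n}) ≥ C·n^{-1/2}` for all `n`. -/
theorem approx_lp_linfty_lower (p : ℝ) (h1 : 0 < p) (h2 : p ≤ 1) :
    ∃ C : ℝ, 0 < C ∧ ∀ n : ℕ,
      C * (n : ℝ) ^ (-(1/2) : ℝ) ≤ approxNumber (ENNReal.ofReal p) ∞ (2 * n) n := by
  refine ⟨1/10, by norm_num, fun n => ?_⟩
  rcases Nat.eq_zero_or_pos n with hn | hn
  · subst hn
    have hlhs : (1/10 : ℝ) * ((0:ℕ) : ℝ) ^ (-(1/2) : ℝ) = 0 := by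
      rw [Nat.cast_zero, Real.zero_rpow (by norm_num), mul_zero]
    rw [hlhs, approxNumber]
    have hset : { r : ℝ | ∃ L : (Fin (2*0) → ℝ) →ₗ[ℝ] (Fin (2*0) → ℝ),
        Module.finrank ℝ (↥(LinearMap.range L)) < 0 ∧
        r = sSup { s : ℝ | ∃ x : Fin (2*0) → ℝ, pNorm (ENNReal.ofReal p) x ≤ 1 ∧
          s = pNorm ∞ (x - L x) } } = ∅ := by
      ext r; simp
    rw [hset, Real.sInf_empty]
  · haveI : NeZero (2*n) := ⟨by omega⟩
    set ε : ℝ := (1/10 : ℝ) * (n : ℝ) ^ (-(1/2) : ℝ) with hε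
    apply le_csInf
    · exact ⟨_, ⟨0, by rw [LinearMap.range_zero, finrank_bot]; exact hn, rfl⟩⟩
    · rintro r ⟨L, hL, rfl⟩
      obtain ⟨j, i, hji⟩ := exists_big_entry hn L hL
      -- uniform bound for members of the inner set
      set K : ℝ := 1 + ∑ j', ∑ i', |L (Pi.single j' 1) i'| with hK
      have hLbound : ∀ x : Fin (2*n) → ℝ, (∀ i', |x i'| ≤ 1) →
          ∀ i', |x i' - L x i'| ≤ K := by
        intro x hx i'
        have hxrepr : x = ∑ j', x j' • (Pi.single j' 1 : Fin (2*n) → ℝ) := by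
          have h := pi_eq_sum_univ x
          convert h using 2 with j'
          funext i''
          simp [Pi.single_apply, eq_comm]
        have hLx : L x i' = ∑ j', x j' * L (Pi.single j' 1) i' := by
          conv_lhs => rw [hxrepr]
          rw [map_sum]
          rw [show (∑ j', L (x j' • (Pi.single j' 1 : Fin (2*n) → ℝ))) =
            ∑ j', x j' • L (Pi.single j' 1) from Finset.sum_congr rfl fun j' _ => by
              rw [map_smul]]
          induction (Finset.univ : Finset (Fin (2*n))) using Finset.cons_induction with
          | empty => rfl
          | cons a s ha ih => rw [Finset.sum_cons, Finset.sum_cons, ← ih]; rfl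
        have habs : |L x i'| ≤ ∑ j', ∑ i'', |L (Pi.single j' 1) i''| := by
          rw [hLx]
          calc |∑ j', x j' * L (Pi.single j' 1) i'|
              ≤ ∑ j', |x j' * L (Pi.single j' 1) i'| := Finset.abs_sum_le_sum_abs _ _
            _ ≤ ∑ j', |L (Pi.single j' 1) i'| := by
                apply Finset.sum_le_sum
                intro j' _
                rw [abs_mul]
                calc |x j'| * |L (Pi.single j' 1) i'|
                    ≤ 1 * |L (Pi.single j' 1) i'| :=
                      mul_le_mul_of_nonneg_right (hx j') (abs_nonneg _)
                  _ = |L (Pi.single j' 1) i'| := one_mul _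
            _ ≤ ∑ j', ∑ i'', |L (Pi.single j' 1) i''| := by
                apply Finset.sum_le_sum
                intro j' _
                exact Finset.single_le_sum (fun i'' _ => abs_nonneg (L (Pi.single j' 1) i'')) (Finset.mem_univ i')
        calc |x i' - L x i'| ≤ |x i'| + |L x i'| := abs_sub _ _
          _ ≤ 1 + ∑ j', ∑ i'', |L (Pi.single j' 1) i''| := add_le_add (hx i') habs
          _ = K := rfl
      have hbdd : ∀ s ∈ { s : ℝ | ∃ x : Fin (2*n) → ℝ, pNorm (ENNReal.ofReal p) x ≤ 1 ∧
          s = pNorm ∞ (x - L x) }, s ≤ K := by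
        rintro s ⟨x, hx, rfl⟩
        rw [pNorm_top]
        apply ciSup_le
        intro i'
        rw [Pi.sub_apply]
        exact hLbound x (coord_le_one h1 hx) i'
      have hmem : pNorm ∞ ((Pi.single j 1 : Fin (2*n) → ℝ) - L (Pi.single j 1)) ∈
          { s : ℝ | ∃ x : Fin (2*n) → ℝ, pNorm (ENNReal.ofReal p) x ≤ 1 ∧
            s = pNorm ∞ (x - L x) } :=
        ⟨Pi.single j 1, le_of_eq (pNorm_single h1 j), rfl⟩
      calc ε ≤ |(Pi.single j 1 : Fin (2*n) → ℝ) i - L (Pi.single j 1) i| := hji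
        _ ≤ ⨆ i', |((Pi.single j 1 : Fin (2*n) → ℝ) - L (Pi.single j 1)) i'| := by
            apply le_ciSup_of_le (Set.Finite.bddAbove (Set.finite_range _)) i
            rw [Pi.sub_apply]
        _ = pNorm ∞ ((Pi.single j 1 : Fin (2*n) → ℝ) - L (Pi.single j 1)) :=
            (pNorm_top _).symm
        _ ≤ sSup _ := le_csSup ⟨K, hbdd⟩ hmem
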